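/- Let M > 0 and let G, H be probability measures supported on [−M, M]. Set f := (f_G + f_H)/2 and w := φ²/f. Then for every integer k ≥ 0 and every real polynomial p of degree at most k, ‖p'‖_{L²(w)} ≤ (2M+1) √(k+1) · ‖p‖_{L²(w)}. -/

import Mathlib

open MeasureTheory Real Filter

/-- The standard normal density. -/
noncomputable def gauss (y : ℝ) : ℝ := (Real.sqrt (2 * Real.pi))⁻¹ * Real.exp (-(y ^ 2) / 2)

/-- The Gaussian mixture density `f_G`. -/
noncomputable def mixDens (G : Measure ℝ) (y : ℝ) : ℝ := ∫ u, gauss (y - u) ∂G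

/-- The regret `Regret(H‖G)`. -/
noncomputable def regret (H G : Measure ℝ) : ℝ :=
  ∫ y, (deriv (mixDens G) y / mixDens G y - deriv (mixDens H) y / mixDens H y) ^ 2 * mixDens G y

/-- The squared Hellinger distance between `f_G` and `f_H`. -/
noncomputable def hellingerSq (G H : Measure ℝ) : ℝ :=
  ∫ y, (Real.sqrt (mixDens G y) - Real.sqrt (mixDens H y)) ^ 2

open Topology

set_option linter.unusedSectionVars false
set_option maxHeartbeats 1000000

namespace BW

lemma c0_pos : 0 < (Real.sqrt (2 * Real.pi))⁻¹ := by
  have : 0 < Real.sqrt (2 * Real.pi) := Real.sqrt_pos.2 (by positivity)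
  positivity

lemma c0_le_one : (Real.sqrt (2 * Real.pi))⁻¹ ≤ 1 := by
  rw [inv_le_one_iff₀]
  right
  rw [show (1:ℝ) = Real.sqrt 1 by simp]
  apply Real.sqrt_le_sqrt
  nlinarith [Real.pi_gt_three]

lemma gauss_pos (y : ℝ) : 0 < gauss y := by
  unfold gauss; positivity

lemma gauss_le_one (y : ℝ) : gauss y ≤ 1 := by
  unfold gauss
  calc (Real.sqrt (2 * Real.pi))⁻¹ * Real.exp (-(y ^ 2) / 2)
      ≤ 1 * 1 := by
        apply mul_le_mul c0_le_one ?_ (Real.exp_pos _).le zero_le_one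
        rw [show (1:ℝ) = Real.exp 0 by simp]
        apply Real.exp_le_exp.2; nlinarith [sq_nonneg y]
    _ = 1 := by ring

lemma gauss_cont : Continuous gauss := by
  unfold gauss; fun_prop

lemma hasDerivAt_gauss (y : ℝ) : HasDerivAt gauss (-y * gauss y) y := by
  unfold gauss
  have h1 : HasDerivAt (fun y : ℝ => -(y ^ 2) / 2) (-y) y := by
    have := ((hasDerivAt_pow 2 y).neg).div_const 2
    simpa using this.congr_deriv (by ring)
  have h2 := (h1.exp).const_mul (Real.sqrt (2 * Real.pi))⁻¹
  refine h2.congr_deriv ?_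
  ring

lemma gauss_anti {a b : ℝ} (h : |a| ≤ |b|) : gauss b ≤ gauss a := by
  unfold gauss
  apply mul_le_mul_of_nonneg_left _ c0_pos.le
  apply Real.exp_le_exp.2
  have : a^2 ≤ b^2 := by
    rw [← sq_abs a, ← sq_abs b]
    exact pow_le_pow_left₀ (abs_nonneg _) h 2
  linarith

lemma abs_mul_gauss_le_one (y : ℝ) : |y| * gauss y ≤ 1 := by
  unfold gauss
  have h1 : |y| ≤ Real.exp (y^2/2) := by
    have := Real.add_one_le_exp (y^2/2)
    nlinarith [sq_nonneg (|y| - 1), sq_abs y, abs_nonneg y]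
  calc |y| * ((Real.sqrt (2 * Real.pi))⁻¹ * Real.exp (-(y ^ 2) / 2))
      ≤ |y| * (1 * Real.exp (-(y ^ 2) / 2)) := by
        apply mul_le_mul_of_nonneg_left _ (abs_nonneg y)
        apply mul_le_mul_of_nonneg_right c0_le_one (Real.exp_pos _).le
    _ = |y| * Real.exp (-(y ^ 2) / 2) := by ring
    _ ≤ Real.exp (y^2/2) * Real.exp (-(y ^ 2) / 2) := by
        apply mul_le_mul_of_nonneg_right h1 (Real.exp_pos _).le
    _ = 1 := by
        rw [← Real.exp_add, show y^2/2 + -(y^2)/2 = 0 by ring, Real.exp_zero]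


set_option linter.unusedSectionVars false

noncomputable def gm (ν : Measure ℝ) (y : ℝ) : ℝ := ∫ u, u * gauss (y - u) ∂ν
noncomputable def g2m (ν : Measure ℝ) (y : ℝ) : ℝ := ∫ u, u ^ 2 * gauss (y - u) ∂ν
noncomputable def sm (ν : Measure ℝ) (y : ℝ) : ℝ := y + gm ν y / mixDens ν y
noncomputable def spd (ν : Measure ℝ) (y : ℝ) : ℝ :=
  1 + (g2m ν y * mixDens ν y - (gm ν y) ^ 2) / (mixDens ν y) ^ 2
noncomputable def wm (ν : Measure ℝ) (y : ℝ) : ℝ := gauss y ^ 2 / mixDens ν y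

section Nu

variable {M : ℝ} (ν : Measure ℝ) [IsProbabilityMeasure ν]

lemma ae_mem (hν : ν (Set.Icc (-M) M)ᶜ = 0) : ∀ᵐ u ∂ν, u ∈ Set.Icc (-M) M := by
  rw [ae_iff]
  convert hν using 2
  rfl

lemma ae_abs_le (hν : ν (Set.Icc (-M) M)ᶜ = 0) : ∀ᵐ u ∂ν, |u| ≤ M := by
  filter_upwards [ae_mem ν hν] with u hu
  rw [abs_le]; exact ⟨hu.1, hu.2⟩

lemma int_gauss (y : ℝ) : Integrable (fun u => gauss (y - u)) ν := by
  apply Integrable.mono' (integrable_const 1)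
  · exact (gauss_cont.comp (continuous_const.sub continuous_id)).aestronglyMeasurable
  · filter_upwards with u
    rw [Real.norm_eq_abs, abs_of_pos (gauss_pos _)]
    exact gauss_le_one _

lemma int_mul_gauss (hν : ν (Set.Icc (-M) M)ᶜ = 0) (y : ℝ) : Integrable (fun u => u * gauss (y - u)) ν := by
  apply Integrable.mono' (integrable_const M)
  · exact (continuous_id.mul (gauss_cont.comp (continuous_const.sub continuous_id))).aestronglyMeasurable
  · filter_upwards [ae_abs_le ν hν] with u hu
    rw [Real.norm_eq_abs, abs_mul, abs_of_pos (gauss_pos _)]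
    calc |u| * gauss (y - u) ≤ M * 1 :=
      mul_le_mul hu (gauss_le_one _) (gauss_pos _).le (le_trans (abs_nonneg u) hu)
    _ = M := by ring

lemma int_sq_mul_gauss (hν : ν (Set.Icc (-M) M)ᶜ = 0) (y : ℝ) : Integrable (fun u => u ^ 2 * gauss (y - u)) ν := by
  apply Integrable.mono' (integrable_const (M ^ 2))
  · exact ((continuous_id.pow 2).mul (gauss_cont.comp (continuous_const.sub continuous_id))).aestronglyMeasurable
  · filter_upwards [ae_abs_le ν hν] with u hu
    rw [Real.norm_eq_abs, abs_mul, abs_of_pos (gauss_pos _), abs_pow]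
    calc |u| ^ 2 * gauss (y - u) ≤ M ^ 2 * 1 := by
          apply mul_le_mul _ (gauss_le_one _) (gauss_pos _).le (by positivity)
          exact pow_le_pow_left₀ (abs_nonneg u) hu 2
    _ = M ^ 2 := by ring

lemma fm_ge (hM : 0 < M) (hν : ν (Set.Icc (-M) M)ᶜ = 0) (y : ℝ) : gauss (|y| + M) ≤ mixDens ν y := by
  have h : ∀ᵐ u ∂ν, gauss (|y| + M) ≤ gauss (y - u) := by
    filter_upwards [ae_abs_le ν hν] with u hu
    apply gauss_anti
    rw [abs_of_nonneg (by positivity : (0:ℝ) ≤ |y| + M)]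
    calc |y - u| ≤ |y| + |u| := abs_sub _ _
    _ ≤ |y| + M := by linarith [hu]
  calc gauss (|y| + M) = ∫ _u, gauss (|y| + M) ∂ν := by simp
  _ ≤ ∫ u, gauss (y - u) ∂ν := integral_mono_ae (integrable_const _) (int_gauss ν y) h
  _ = mixDens ν y := rfl

lemma fm_pos (hM : 0 < M) (hν : ν (Set.Icc (-M) M)ᶜ = 0) (y : ℝ) : 0 < mixDens ν y := lt_of_lt_of_le (gauss_pos _) (fm_ge ν hM hν y)

lemma abs_gm_le (hν : ν (Set.Icc (-M) M)ᶜ = 0) (y : ℝ) : |gm ν y| ≤ M * mixDens ν y := by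
  have h1 : |gm ν y| ≤ ∫ u, |u| * |gauss (y - u)| ∂ν := by
    simpa [Real.norm_eq_abs, gm] using
      norm_integral_le_integral_norm (μ := ν) (f := fun u => u * gauss (y - u))
  refine h1.trans ?_
  rw [show M * mixDens ν y = ∫ u, M * gauss (y - u) ∂ν by
    rw [integral_const_mul]; rfl]
  have habs : Integrable (fun u => |u| * |gauss (y - u)|) ν := by
    have := (int_mul_gauss ν hν y).abs
    apply this.congr
    filter_upwards with u
    rw [abs_mul]
  apply integral_mono_ae habs ((int_gauss ν y).const_mul M)
  filter_upwards [ae_abs_le ν hν] with u hu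
  rw [abs_of_pos (gauss_pos _)]
  exact mul_le_mul_of_nonneg_right hu (gauss_pos _).le

lemma g2m_nonneg (y : ℝ) : 0 ≤ g2m ν y :=
  integral_nonneg fun u => mul_nonneg (sq_nonneg u) (gauss_pos _).le

lemma g2m_le (hν : ν (Set.Icc (-M) M)ᶜ = 0) (y : ℝ) : g2m ν y ≤ M ^ 2 * mixDens ν y := by
  rw [show M ^ 2 * mixDens ν y = ∫ u, M ^ 2 * gauss (y - u) ∂ν by
    rw [integral_const_mul]; rfl]
  apply integral_mono_ae (int_sq_mul_gauss ν hν y) ((int_gauss ν y).const_mul _)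
  filter_upwards [ae_abs_le ν hν] with u hu
  apply mul_le_mul_of_nonneg_right _ (gauss_pos _).le
  calc u ^ 2 = |u| ^ 2 := (sq_abs u).symm
  _ ≤ M ^ 2 := pow_le_pow_left₀ (abs_nonneg u) hu 2

lemma hasDerivAt_fm (hν : ν (Set.Icc (-M) M)ᶜ = 0) (y : ℝ) :
    HasDerivAt (mixDens ν) (-(y * mixDens ν y) + gm ν y) y := by
  have h := hasDerivAt_integral_of_dominated_loc_of_deriv_le (μ := ν) (x₀ := y)
      (F := fun x u => gauss (x - u)) (F' := fun x u => -(x - u) * gauss (x - u))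
      (bound := fun _ => (1:ℝ)) (Metric.ball_mem_nhds y one_pos)
      (Filter.Eventually.of_forall fun x =>
        (gauss_cont.comp (continuous_const.sub continuous_id)).aestronglyMeasurable)
      (int_gauss ν y)
      (((continuous_const.sub continuous_id).neg.mul
        (gauss_cont.comp (continuous_const.sub continuous_id))).aestronglyMeasurable)
      ?_ (integrable_const 1) ?_
  · have hi : ∫ u, -(y - u) * gauss (y - u) ∂ν = -(y * mixDens ν y) + gm ν y := by
      rw [show (fun u => -(y - u) * gauss (y - u))
          = fun u => (-y) * gauss (y - u) + u * gauss (y - u) from funext fun u => by ring]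
      rw [integral_add ((int_gauss ν y).const_mul (-y)) (int_mul_gauss ν hν y),
        integral_const_mul]
      unfold mixDens gm
      ring
    exact hi ▸ h.2
  · filter_upwards with u
    intro x _
    rw [Real.norm_eq_abs, abs_mul, abs_neg, abs_of_pos (gauss_pos _)]
    exact abs_mul_gauss_le_one _
  · filter_upwards with u
    intro x _
    have h1 : HasDerivAt (fun x : ℝ => x - u) 1 x := (hasDerivAt_id x).sub_const u
    have := (hasDerivAt_gauss (x - u)).comp x h1
    exact this.congr_deriv (by ring)

lemma hasDerivAt_gm (hν : ν (Set.Icc (-M) M)ᶜ = 0) (y : ℝ) :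
    HasDerivAt (gm ν) (-(y * gm ν y) + g2m ν y) y := by
  have h := hasDerivAt_integral_of_dominated_loc_of_deriv_le (μ := ν) (x₀ := y)
      (F := fun x u => u * gauss (x - u)) (F' := fun x u => u * (-(x - u) * gauss (x - u)))
      (bound := fun _ => M) (Metric.ball_mem_nhds y one_pos)
      (Filter.Eventually.of_forall fun x =>
        (continuous_id.mul (gauss_cont.comp (continuous_const.sub continuous_id))).aestronglyMeasurable)
      (int_mul_gauss ν hν y)
      ((continuous_id.mul ((continuous_const.sub continuous_id).neg.mul
        (gauss_cont.comp (continuous_const.sub continuous_id)))).aestronglyMeasurable)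
      ?_ (integrable_const M) ?_
  · have hi : ∫ u, u * (-(y - u) * gauss (y - u)) ∂ν = -(y * gm ν y) + g2m ν y := by
      rw [show (fun u => u * (-(y - u) * gauss (y - u)))
          = fun u => (-y) * (u * gauss (y - u)) + u ^ 2 * gauss (y - u) from
          funext fun u => by ring]
      rw [integral_add ((int_mul_gauss ν hν y).const_mul (-y)) (int_sq_mul_gauss ν hν y),
        integral_const_mul]
      unfold gm g2m
      ring
    exact hi ▸ h.2
  · filter_upwards [ae_abs_le ν hν] with u hu
    intro x _
    rw [Real.norm_eq_abs, abs_mul, abs_mul, abs_neg, abs_of_pos (gauss_pos _)]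
    calc |u| * (|x - u| * gauss (x - u)) ≤ M * 1 :=
      mul_le_mul hu (abs_mul_gauss_le_one _) (mul_nonneg (abs_nonneg _) (gauss_pos _).le) (le_trans (abs_nonneg u) hu)
    _ = M := by ring
  · filter_upwards with u
    intro x _
    have h1 : HasDerivAt (fun x : ℝ => x - u) 1 x := (hasDerivAt_id x).sub_const u
    have := ((hasDerivAt_gauss (x - u)).comp x h1).const_mul u
    simpa using this

lemma cont_fm (hν : ν (Set.Icc (-M) M)ᶜ = 0) : Continuous (mixDens ν) :=
  continuous_iff_continuousAt.2 fun y => (hasDerivAt_fm ν hν y).continuousAt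

lemma cont_gm (hν : ν (Set.Icc (-M) M)ᶜ = 0) : Continuous (gm ν) :=
  continuous_iff_continuousAt.2 fun y => (hasDerivAt_gm ν hν y).continuousAt

lemma cont_g2m (hν : ν (Set.Icc (-M) M)ᶜ = 0) : Continuous (g2m ν) := by
  apply continuous_of_dominated (bound := fun u : ℝ => u ^ 2)
  · exact fun x => ((continuous_id.pow 2).mul
      (gauss_cont.comp (continuous_const.sub continuous_id))).aestronglyMeasurable
  · intro x
    filter_upwards with u
    rw [Real.norm_eq_abs, abs_mul, abs_pow, sq_abs, abs_of_pos (gauss_pos _)]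
    calc u ^ 2 * gauss (x - u) ≤ u ^ 2 * 1 :=
      mul_le_mul_of_nonneg_left (gauss_le_one _) (sq_nonneg u)
    _ = u ^ 2 := by ring
  · apply Integrable.mono' (integrable_const (M ^ 2))
    · exact (continuous_id.pow 2).aestronglyMeasurable
    · filter_upwards [ae_abs_le ν hν] with u hu
      rw [Real.norm_eq_abs, abs_pow, sq_abs]
      calc u ^ 2 = |u| ^ 2 := (sq_abs u).symm
      _ ≤ M ^ 2 := pow_le_pow_left₀ (abs_nonneg u) hu 2
  · filter_upwards with u
    exact continuous_const.mul (gauss_cont.comp (continuous_id.sub continuous_const))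

lemma fm_ne (hM : 0 < M) (hν : ν (Set.Icc (-M) M)ᶜ = 0) (y : ℝ) : mixDens ν y ≠ 0 :=
  (fm_pos ν hM hν y).ne'

lemma wm_pos (hM : 0 < M) (hν : ν (Set.Icc (-M) M)ᶜ = 0) (y : ℝ) : 0 < wm ν y :=
  div_pos (pow_pos (gauss_pos y) 2) (fm_pos ν hM hν y)

lemma cont_wm (hM : 0 < M) (hν : ν (Set.Icc (-M) M)ᶜ = 0) : Continuous (wm ν) :=
  ((gauss_cont.pow 2).div (cont_fm ν hν)) (fun y => fm_ne ν hM hν y)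

lemma cont_sm (hM : 0 < M) (hν : ν (Set.Icc (-M) M)ᶜ = 0) : Continuous (sm ν) :=
  continuous_id.add (((cont_gm ν hν).div (cont_fm ν hν)) (fun y => fm_ne ν hM hν y))

lemma cont_spd (hM : 0 < M) (hν : ν (Set.Icc (-M) M)ᶜ = 0) : Continuous (spd ν) := by
  apply continuous_const.add
  apply Continuous.div
  · exact ((cont_g2m ν hν).mul (cont_fm ν hν)).sub ((cont_gm ν hν).pow 2)
  · exact (cont_fm ν hν).pow 2
  · exact fun y => pow_ne_zero 2 (fm_ne ν hM hν y)

lemma hasDerivAt_wm (hM : 0 < M) (hν : ν (Set.Icc (-M) M)ᶜ = 0) (y : ℝ) :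
    HasDerivAt (wm ν) (-(sm ν y * wm ν y)) y := by
  have hg2 : HasDerivAt (fun y => gauss y ^ 2) (2 * gauss y ^ 1 * (-y * gauss y)) y :=
    (hasDerivAt_gauss y).pow 2
  have h := hg2.div (hasDerivAt_fm ν hν y) (fm_ne ν hM hν y)
  refine h.congr_deriv ?_
  have hne := fm_ne ν hM hν y
  unfold sm wm
  field_simp
  ring

lemma hasDerivAt_sm (hM : 0 < M) (hν : ν (Set.Icc (-M) M)ᶜ = 0) (y : ℝ) :
    HasDerivAt (sm ν) (spd ν y) y := by
  have h := (hasDerivAt_id y).add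
    ((hasDerivAt_gm ν hν y).div (hasDerivAt_fm ν hν y) (fm_ne ν hM hν y))
  refine h.congr_deriv ?_
  have hne := fm_ne ν hM hν y
  unfold spd
  field_simp
  ring

lemma abs_sm_le (hM : 0 < M) (hν : ν (Set.Icc (-M) M)ᶜ = 0) (y : ℝ) :
    |sm ν y| ≤ |y| + M := by
  unfold sm
  refine (abs_add_le _ _).trans ?_
  have h2 : |gm ν y / mixDens ν y| ≤ M := by
    rw [abs_div, abs_of_pos (fm_pos ν hM hν y), div_le_iff₀ (fm_pos ν hM hν y)]
    exact abs_gm_le ν hν y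
  linarith

lemma abs_spd_le (hM : 0 < M) (hν : ν (Set.Icc (-M) M)ᶜ = 0) (y : ℝ) :
    |spd ν y| ≤ 1 + M ^ 2 := by
  unfold spd
  have hf := fm_pos ν hM hν y
  have h1 : |(g2m ν y * mixDens ν y - gm ν y ^ 2) / mixDens ν y ^ 2| ≤ M ^ 2 := by
    rw [abs_div, abs_of_pos (pow_pos hf 2), div_le_iff₀ (pow_pos hf 2)]
    rw [abs_le]
    constructor
    · have := abs_gm_le ν hν y
      have h2 : gm ν y ^ 2 ≤ (M * mixDens ν y) ^ 2 := by
        rw [← sq_abs (gm ν y)]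
        exact pow_le_pow_left₀ (abs_nonneg _) this 2
      nlinarith [g2m_nonneg ν y]
    · have := g2m_le ν hν y
      nlinarith [sq_nonneg (gm ν y)]
  calc |1 + (g2m ν y * mixDens ν y - gm ν y ^ 2) / mixDens ν y ^ 2|
      ≤ 1 + |(g2m ν y * mixDens ν y - gm ν y ^ 2) / mixDens ν y ^ 2| := by
        refine (abs_add_le _ _).trans ?_
        simp
  _ ≤ 1 + M ^ 2 := by linarith

lemma spd_le (hM : 0 < M) (hν : ν (Set.Icc (-M) M)ᶜ = 0) (y : ℝ) :
    spd ν y ≤ 1 + M ^ 2 :=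
  (le_abs_self _).trans (abs_spd_le ν hM hν y)

lemma wm_le (hM : 0 < M) (hν : ν (Set.Icc (-M) M)ᶜ = 0) (y : ℝ) :
    wm ν y ≤ Real.exp (M ^ 2) *
      (Real.exp (-((y - M) ^ 2) / 2) + Real.exp (-((y + M) ^ 2) / 2)) := by
  have hf := fm_pos ν hM hν y
  have h1 : wm ν y ≤ gauss y ^ 2 / gauss (|y| + M) := by
    unfold wm
    apply div_le_div_of_nonneg_left (by positivity) (gauss_pos _) (fm_ge ν hM hν y)
  refine h1.trans ?_
  have h2 : gauss y ^ 2 / gauss (|y| + M)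
      = (Real.sqrt (2 * Real.pi))⁻¹ * Real.exp (M ^ 2) * Real.exp (-((|y| - M) ^ 2) / 2) := by
    rw [div_eq_iff (ne_of_gt (gauss_pos _))]
    unfold gauss
    have e1 : ((Real.sqrt (2 * Real.pi))⁻¹ * Real.exp (-(y ^ 2) / 2)) ^ 2
        = ((Real.sqrt (2 * Real.pi))⁻¹)^2 * Real.exp ((-(y ^ 2) / 2) + (-(y ^ 2) / 2)) := by
      rw [Real.exp_add]; ring
    have e2 : (Real.sqrt (2 * Real.pi))⁻¹ * Real.exp (M ^ 2) * Real.exp (-((|y| - M) ^ 2) / 2) *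
        ((Real.sqrt (2 * Real.pi))⁻¹ * Real.exp (-((|y| + M) ^ 2) / 2))
        = ((Real.sqrt (2 * Real.pi))⁻¹)^2 *
          Real.exp (M ^ 2 + (-((|y| - M) ^ 2) / 2) + (-((|y| + M) ^ 2) / 2)) := by
      rw [Real.exp_add, Real.exp_add]; ring
    rw [e1, e2]
    congr 2
    rw [← sq_abs y]; ring
  rw [h2]
  have h3 : Real.exp (-((|y| - M) ^ 2) / 2)
      ≤ Real.exp (-((y - M) ^ 2) / 2) + Real.exp (-((y + M) ^ 2) / 2) := by
    rcases le_or_gt 0 y with hy | hy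
    · rw [abs_of_nonneg hy]
      nlinarith [Real.exp_pos (-((y + M) ^ 2) / 2), Real.exp_pos (-((y - M) ^ 2) / 2)]
    · rw [abs_of_neg hy]
      have : (-y - M) ^ 2 = (y + M) ^ 2 := by ring
      rw [this]
      nlinarith [Real.exp_pos (-((y - M) ^ 2) / 2), Real.exp_pos (-((y + M) ^ 2) / 2)]
  calc (Real.sqrt (2 * Real.pi))⁻¹ * Real.exp (M ^ 2) * Real.exp (-((|y| - M) ^ 2) / 2)
      ≤ 1 * Real.exp (M ^ 2) * (Real.exp (-((y - M) ^ 2) / 2) + Real.exp (-((y + M) ^ 2) / 2)) := by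
        apply mul_le_mul _ h3 (Real.exp_pos _).le (by positivity)
        exact mul_le_mul_of_nonneg_right c0_le_one (Real.exp_pos _).le
  _ = Real.exp (M ^ 2) * (Real.exp (-((y - M) ^ 2) / 2) + Real.exp (-((y + M) ^ 2) / 2)) := by
        ring

end Nu

section Envelope

lemma base_ineq (n : ℕ) (hn : 0 < n) (t : ℝ) :
    1 + 2 * t ^ 2 ≤ (1 + 8 * n) * Real.exp (t ^ 2 / (4 * n)) := by
  have h1 : 1 + t ^ 2 / (4 * n) ≤ Real.exp (t ^ 2 / (4 * n)) := by
    have := Real.add_one_le_exp (t ^ 2 / (4 * n))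
    linarith
  have hn1 : (1:ℝ) ≤ n := by exact_mod_cast hn
  have h2 : (1 + 8 * (n:ℝ)) * (1 + t ^ 2 / (4 * n)) ≤ (1 + 8 * n) * Real.exp (t ^ 2 / (4 * n)) := by
    apply mul_le_mul_of_nonneg_left h1 (by positivity)
  refine le_trans ?_ h2
  have h3 : (1 + 8 * (n:ℝ)) * (1 + t ^ 2 / (4 * n)) = 1 + 8*n + t^2/(4*n) + 2 * t^2 := by
    field_simp
    ring
  rw [h3]
  have h4 : 0 ≤ t^2/(4*(n:ℝ)) := by positivity
  nlinarith

lemma pow_env_bound (n : ℕ) (hn : 0 < n) (t : ℝ) :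
    (1 + 2 * t ^ 2) ^ n ≤ (1 + 8 * n) ^ n * Real.exp (t ^ 2 / 4) := by
  have h := pow_le_pow_left₀ (by positivity) (base_ineq n hn t) n
  refine h.trans ?_
  rw [mul_pow, ← Real.exp_nat_mul]
  apply mul_le_mul_of_nonneg_left _ (by positivity)
  apply le_of_eq
  congr 1
  field_simp

lemma env_pointwise (n : ℕ) (a : ℝ) : ∃ C : ℝ, 0 ≤ C ∧ ∀ y : ℝ,
    (1 + y ^ 2) ^ n * Real.exp (-((y - a) ^ 2) / 2) ≤ C * Real.exp (-((y - a) ^ 2) / 4) := by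
  rcases Nat.eq_zero_or_pos n with h0 | hn
  · refine ⟨1, zero_le_one, fun y => ?_⟩
    rw [h0, pow_zero, one_mul, one_mul]
    apply Real.exp_le_exp.2
    nlinarith [sq_nonneg (y - a)]
  · refine ⟨(1 + 2 * a ^ 2) ^ n * (1 + 8 * n) ^ n, by positivity, fun y => ?_⟩
    have h1 : (1 + y ^ 2) ≤ (1 + 2 * a ^ 2) * (1 + 2 * (y - a) ^ 2) := by
      nlinarith [sq_nonneg (y - a), sq_nonneg a, sq_nonneg (a * (y-a)), sq_nonneg (y - 2*a)]
    have h2 : (1 + y ^ 2) ^ n ≤ ((1 + 2 * a ^ 2) * (1 + 2 * (y - a) ^ 2)) ^ n :=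
      pow_le_pow_left₀ (by positivity) h1 n
    have h3 := pow_env_bound n hn (y - a)
    calc (1 + y ^ 2) ^ n * Real.exp (-((y - a) ^ 2) / 2)
        ≤ ((1 + 2 * a ^ 2) ^ n * ((1 + 8 * n) ^ n * Real.exp ((y - a) ^ 2 / 4)))
            * Real.exp (-((y - a) ^ 2) / 2) := by
          apply mul_le_mul_of_nonneg_right _ (Real.exp_pos _).le
          rw [mul_pow] at h2
          refine h2.trans ?_
          exact mul_le_mul_of_nonneg_left h3 (by positivity)
    _ = (1 + 2 * a ^ 2) ^ n * (1 + 8 * n) ^ n *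
          (Real.exp ((y - a) ^ 2 / 4) * Real.exp (-((y - a) ^ 2) / 2)) := by ring
    _ = (1 + 2 * a ^ 2) ^ n * (1 + 8 * n) ^ n * Real.exp (-((y - a) ^ 2) / 4) := by
          rw [← Real.exp_add]
          congr 1
          ring

lemma integrable_exp_quarter (a : ℝ) :
    Integrable (fun y : ℝ => Real.exp (-((y - a) ^ 2) / 4)) := by
  have h := integrable_exp_neg_mul_sq (b := (4:ℝ)⁻¹) (by norm_num)
  have h2 := h.comp_sub_right a
  apply h2.congr
  filter_upwards with y
  congr 1
  ring

lemma integrable_env (n : ℕ) (a : ℝ) :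
    Integrable (fun y : ℝ => (1 + y ^ 2) ^ n * Real.exp (-((y - a) ^ 2) / 2)) := by
  obtain ⟨C, hC, hb⟩ := env_pointwise n a
  apply Integrable.mono' ((integrable_exp_quarter a).const_mul C)
  · apply Continuous.aestronglyMeasurable
    fun_prop
  · filter_upwards with y
    rw [Real.norm_eq_abs, abs_of_nonneg (by positivity)]
    exact hb y

lemma tendsto_exp_quarter_atTop (a : ℝ) :
    Tendsto (fun y : ℝ => Real.exp (-((y - a) ^ 2) / 4)) atTop (𝓝 0) := by
  apply Real.tendsto_exp_atBot.comp
  have h1 : Tendsto (fun y : ℝ => y - a) atTop atTop :=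
    tendsto_atTop_add_const_right _ _ tendsto_id
  have h2 : Tendsto (fun y : ℝ => (y - a) * (y - a)) atTop atTop :=
    h1.atTop_mul_atTop₀ h1
  have h3 : Tendsto (fun y : ℝ => -(((y - a) * (y - a)) / 4)) atTop atBot := by
    apply tendsto_neg_atTop_atBot.comp
    exact h2.atTop_div_const (by norm_num)
  apply h3.congr
  intro y
  ring

lemma tendsto_exp_quarter_atBot (a : ℝ) :
    Tendsto (fun y : ℝ => Real.exp (-((y - a) ^ 2) / 4)) atBot (𝓝 0) := by
  apply Real.tendsto_exp_atBot.comp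
  have h1 : Tendsto (fun y : ℝ => y - a) atBot atBot :=
    tendsto_atBot_add_const_right _ _ tendsto_id
  have h2 : Tendsto (fun y : ℝ => (y - a) * (y - a)) atBot atTop :=
    h1.atBot_mul_atBot₀ h1
  have h3 : Tendsto (fun y : ℝ => -(((y - a) * (y - a)) / 4)) atBot atBot := by
    apply tendsto_neg_atTop_atBot.comp
    exact h2.atTop_div_const (by norm_num)
  apply h3.congr
  intro y
  ring

lemma poly_abs_le (y : ℝ) : |y| ≤ 1 + y ^ 2 := by
  nlinarith [sq_nonneg (|y| - 1), sq_abs y, abs_nonneg y]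

lemma poly_bound (q : Polynomial ℝ) : ∃ C : ℝ, 0 ≤ C ∧ ∀ y : ℝ,
    |q.eval y| ≤ C * (1 + y ^ 2) ^ q.natDegree := by
  refine ⟨∑ i ∈ Finset.range (q.natDegree + 1), |q.coeff i|,
    Finset.sum_nonneg fun i _ => abs_nonneg _, fun y => ?_⟩
  rw [Polynomial.eval_eq_sum_range, Finset.sum_mul]
  refine (Finset.abs_sum_le_sum_abs _ _).trans ?_
  apply Finset.sum_le_sum
  intro i hi
  rw [abs_mul, abs_pow]
  apply mul_le_mul_of_nonneg_left _ (abs_nonneg _)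
  calc |y| ^ i ≤ (1 + y ^ 2) ^ i := pow_le_pow_left₀ (abs_nonneg _) (poly_abs_le y) i
  _ ≤ (1 + y ^ 2) ^ q.natDegree := by
      apply pow_le_pow_right₀ (by nlinarith [sq_nonneg y])
      exact Nat.lt_succ_iff.mp (Finset.mem_range.mp hi)

end Envelope

section IBP

lemma integral_deriv_eq_zero {u u' : ℝ → ℝ} (hd : ∀ y, HasDerivAt u (u' y) y)
    (hi : Integrable u') (ht : Tendsto u atTop (𝓝 0)) (hb : Tendsto u atBot (𝓝 0)) :
    ∫ y, u' y = 0 := by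
  have key : ∀ r : ℝ, ∫ y in (-r)..r, u' y = u r - u (-r) := fun r =>
    intervalIntegral.integral_eq_sub_of_hasDerivAt (fun x _ => hd x)
      hi.intervalIntegrable
  have h1 : Tendsto (fun r : ℝ => ∫ y in (-r)..r, u' y) atTop (𝓝 (∫ y, u' y)) :=
    intervalIntegral_tendsto_integral hi tendsto_neg_atTop_atBot tendsto_id
  have h2 : Tendsto (fun r : ℝ => u r - u (-r)) atTop (𝓝 (0 - 0)) :=
    ht.sub (hb.comp tendsto_neg_atTop_atBot)
  have h3 : Tendsto (fun r : ℝ => ∫ y in (-r)..r, u' y) atTop (𝓝 (0 - 0)) := by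
    apply h2.congr
    intro r
    exact (key r).symm
  have := tendsto_nhds_unique h1 h3
  simpa using this

lemma integral_cauchy_schwarz {a b : ℝ → ℝ} (ha : Integrable (fun y => a y ^ 2))
    (hb : Integrable (fun y => b y ^ 2)) (hab : Integrable (fun y => a y * b y)) :
    (∫ y, a y * b y) ^ 2 ≤ (∫ y, a y ^ 2) * (∫ y, b y ^ 2) := by
  have key : ∀ t : ℝ, 0 ≤ (∫ y, b y ^ 2) * (t * t) + (2 * ∫ y, a y * b y) * t
      + ∫ y, a y ^ 2 := by
    intro t
    have h0 : 0 ≤ ∫ y, (t * b y + a y) ^ 2 := integral_nonneg fun y => sq_nonneg _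
    have hexp : (fun y => (t * b y + a y) ^ 2)
        = fun y => (t ^ 2 * b y ^ 2 + (2 * t) * (a y * b y)) + a y ^ 2 := funext fun y => by ring
    have i1 : Integrable (fun y => t ^ 2 * b y ^ 2 + (2 * t) * (a y * b y)) :=
      (hb.const_mul (t ^ 2)).add (hab.const_mul (2 * t))
    have e1 : ∫ y, ((t ^ 2 * b y ^ 2 + (2 * t) * (a y * b y)) + a y ^ 2)
        = (∫ y, (t ^ 2 * b y ^ 2 + (2 * t) * (a y * b y))) + ∫ y, a y ^ 2 :=
      integral_add i1 ha
    have e2 : ∫ y, (t ^ 2 * b y ^ 2 + (2 * t) * (a y * b y))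
        = (∫ y, t ^ 2 * b y ^ 2) + ∫ y, (2 * t) * (a y * b y) :=
      integral_add (hb.const_mul (t ^ 2)) (hab.const_mul (2 * t))
    rw [hexp, e1, e2, integral_const_mul, integral_const_mul] at h0
    nlinarith
  have hd := discrim_le_zero key
  rw [discrim] at hd
  nlinarith

end IBP

section Envelope2

lemma tendsto_env_atTop (n : ℕ) (a : ℝ) :
    Tendsto (fun y : ℝ => (1 + y ^ 2) ^ n * Real.exp (-((y - a) ^ 2) / 2)) atTop (𝓝 0) := by
  obtain ⟨C, hC, hb⟩ := env_pointwise n a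
  refine squeeze_zero_norm (fun y => ?_)
    (by simpa using (tendsto_exp_quarter_atTop a).const_mul C)
  rw [Real.norm_eq_abs, abs_of_nonneg (by positivity)]
  exact hb y

lemma tendsto_env_atBot (n : ℕ) (a : ℝ) :
    Tendsto (fun y : ℝ => (1 + y ^ 2) ^ n * Real.exp (-((y - a) ^ 2) / 2)) atBot (𝓝 0) := by
  obtain ⟨C, hC, hb⟩ := env_pointwise n a
  refine squeeze_zero_norm (fun y => ?_)
    (by simpa using (tendsto_exp_quarter_atBot a).const_mul C)
  rw [Real.norm_eq_abs, abs_of_nonneg (by positivity)]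
  exact hb y

end Envelope2

section Main

variable {M : ℝ} (ν : Measure ℝ) [IsProbabilityMeasure ν]

/-- The dominating envelope. -/
noncomputable def DEnv (M : ℝ) (n : ℕ) (y : ℝ) : ℝ :=
  Real.exp (M ^ 2) * ((1 + y ^ 2) ^ n * Real.exp (-((y - M) ^ 2) / 2)
    + (1 + y ^ 2) ^ n * Real.exp (-((y + M) ^ 2) / 2))

lemma integrable_DEnv (n : ℕ) : Integrable (DEnv M n) := by
  unfold DEnv
  apply Integrable.const_mul
  apply (integrable_env n M).add
  have h := integrable_env n (-M)
  apply h.congr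
  filter_upwards with y
  rw [sub_neg_eq_add]

lemma tendsto_DEnv_atTop (n : ℕ) : Tendsto (DEnv M n) atTop (𝓝 0) := by
  unfold DEnv
  have h1 := tendsto_env_atTop n M
  have h2 : Tendsto (fun y : ℝ => (1 + y ^ 2) ^ n * Real.exp (-((y + M) ^ 2) / 2)) atTop (𝓝 0) := by
    have := tendsto_env_atTop n (-M)
    apply this.congr
    intro y
    rw [sub_neg_eq_add]
  simpa using (h1.add h2).const_mul (Real.exp (M ^ 2))

lemma tendsto_DEnv_atBot (n : ℕ) : Tendsto (DEnv M n) atBot (𝓝 0) := by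
  unfold DEnv
  have h1 := tendsto_env_atBot n M
  have h2 : Tendsto (fun y : ℝ => (1 + y ^ 2) ^ n * Real.exp (-((y + M) ^ 2) / 2)) atBot (𝓝 0) := by
    have := tendsto_env_atBot n (-M)
    apply this.congr
    intro y
    rw [sub_neg_eq_add]
  simpa using (h1.add h2).const_mul (Real.exp (M ^ 2))

lemma poly_w_le_DEnv (hM : 0 < M) (hν : ν (Set.Icc (-M) M)ᶜ = 0) (n : ℕ) (y : ℝ) :
    (1 + y ^ 2) ^ n * wm ν y ≤ DEnv M n y := by
  unfold DEnv
  have h := wm_le ν hM hν y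
  have hp : (0:ℝ) ≤ (1 + y ^ 2) ^ n := by positivity
  calc (1 + y ^ 2) ^ n * wm ν y
      ≤ (1 + y ^ 2) ^ n * (Real.exp (M ^ 2) *
          (Real.exp (-((y - M) ^ 2) / 2) + Real.exp (-((y + M) ^ 2) / 2))) :=
        mul_le_mul_of_nonneg_left h hp
  _ = Real.exp (M ^ 2) * ((1 + y ^ 2) ^ n * Real.exp (-((y - M) ^ 2) / 2)
        + (1 + y ^ 2) ^ n * Real.exp (-((y + M) ^ 2) / 2)) := by ring

lemma workhorse_int (hM : 0 < M) (hν : ν (Set.Icc (-M) M)ᶜ = 0) {h : ℝ → ℝ}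
    (hmeas : AEStronglyMeasurable h volume) {C : ℝ} (hC : 0 ≤ C) {n : ℕ}
    (hb : ∀ y, |h y| ≤ C * ((1 + y ^ 2) ^ n * wm ν y)) : Integrable h := by
  apply Integrable.mono' ((integrable_DEnv (M := M) n).const_mul C) hmeas
  filter_upwards with y
  rw [Real.norm_eq_abs]
  exact (hb y).trans (mul_le_mul_of_nonneg_left (poly_w_le_DEnv ν hM hν n y) hC)

lemma workhorse_tendsto_atTop (hM : 0 < M) (hν : ν (Set.Icc (-M) M)ᶜ = 0) {h : ℝ → ℝ}
    {C : ℝ} (hC : 0 ≤ C) {n : ℕ}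
    (hb : ∀ y, |h y| ≤ C * ((1 + y ^ 2) ^ n * wm ν y)) : Tendsto h atTop (𝓝 0) := by
  refine squeeze_zero_norm (fun y => ?_)
    (by simpa using (tendsto_DEnv_atTop (M := M) n).const_mul C)
  rw [Real.norm_eq_abs]
  exact (hb y).trans (mul_le_mul_of_nonneg_left (poly_w_le_DEnv ν hM hν n y) hC)

lemma workhorse_tendsto_atBot (hM : 0 < M) (hν : ν (Set.Icc (-M) M)ᶜ = 0) {h : ℝ → ℝ}
    {C : ℝ} (hC : 0 ≤ C) {n : ℕ}
    (hb : ∀ y, |h y| ≤ C * ((1 + y ^ 2) ^ n * wm ν y)) : Tendsto h atBot (𝓝 0) := by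
  refine squeeze_zero_norm (fun y => ?_)
    (by simpa using (tendsto_DEnv_atBot (M := M) n).const_mul C)
  rw [Real.norm_eq_abs]
  exact (hb y).trans (mul_le_mul_of_nonneg_left (poly_w_le_DEnv ν hM hν n y) hC)

lemma abs_sm_le' (hM : 0 < M) (hν : ν (Set.Icc (-M) M)ᶜ = 0) (y : ℝ) :
    |sm ν y| ≤ (1 + M) * (1 + y ^ 2) := by
  refine (abs_sm_le ν hM hν y).trans ?_
  have h1 := poly_abs_le y
  nlinarith [sq_nonneg y]

lemma intJ1 (hM : 0 < M) (hν : ν (Set.Icc (-M) M)ᶜ = 0) (q : Polynomial ℝ) :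
    Integrable (fun y => q.eval y * wm ν y) := by
  obtain ⟨C, hC, hb⟩ := poly_bound q
  apply workhorse_int ν hM hν (n := q.natDegree) (C := C) (h := fun y => q.eval y * wm ν y)
    ((q.continuous.mul (cont_wm ν hM hν)).aestronglyMeasurable) hC
  intro y
  rw [abs_mul, abs_of_pos (wm_pos ν hM hν y)]
  calc |q.eval y| * wm ν y ≤ (C * (1 + y ^ 2) ^ q.natDegree) * wm ν y :=
    mul_le_mul_of_nonneg_right (hb y) (wm_pos ν hM hν y).le
  _ = C * ((1 + y ^ 2) ^ q.natDegree * wm ν y) := by ring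

lemma intJ2 (hM : 0 < M) (hν : ν (Set.Icc (-M) M)ᶜ = 0) (q : Polynomial ℝ) :
    Integrable (fun y => sm ν y * q.eval y * wm ν y) := by
  obtain ⟨C, hC, hb⟩ := poly_bound q
  apply workhorse_int ν hM hν (n := q.natDegree + 1) (C := (1 + M) * C) (h := fun y => sm ν y * q.eval y * wm ν y)
    (((cont_sm ν hM hν).mul q.continuous |>.mul (cont_wm ν hM hν)).aestronglyMeasurable)
    (by positivity)
  intro y
  rw [abs_mul, abs_mul, abs_of_pos (wm_pos ν hM hν y)]
  have h1 : |sm ν y| * |q.eval y| ≤ ((1 + M) * (1 + y ^ 2)) * (C * (1 + y ^ 2) ^ q.natDegree) :=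
    mul_le_mul (abs_sm_le' ν hM hν y) (hb y) (abs_nonneg _) (by positivity)
  calc |sm ν y| * |q.eval y| * wm ν y
      ≤ ((1 + M) * (1 + y ^ 2)) * (C * (1 + y ^ 2) ^ q.natDegree) * wm ν y :=
        mul_le_mul_of_nonneg_right h1 (wm_pos ν hM hν y).le
  _ = (1 + M) * C * ((1 + y ^ 2) ^ (q.natDegree + 1) * wm ν y) := by
        rw [pow_succ]
        ring

lemma intJ3 (hM : 0 < M) (hν : ν (Set.Icc (-M) M)ᶜ = 0) (q : Polynomial ℝ) :
    Integrable (fun y => sm ν y ^ 2 * q.eval y * wm ν y) := by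
  obtain ⟨C, hC, hb⟩ := poly_bound q
  apply workhorse_int ν hM hν (n := q.natDegree + 2) (C := (1 + M) ^ 2 * C) (h := fun y => sm ν y ^ 2 * q.eval y * wm ν y)
    ((((cont_sm ν hM hν).pow 2).mul q.continuous |>.mul (cont_wm ν hM hν)).aestronglyMeasurable)
    (by positivity)
  intro y
  rw [abs_mul, abs_mul, abs_of_pos (wm_pos ν hM hν y), abs_pow]
  have h0 : |sm ν y| ^ 2 ≤ ((1 + M) * (1 + y ^ 2)) ^ 2 :=
    pow_le_pow_left₀ (abs_nonneg _) (abs_sm_le' ν hM hν y) 2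
  have h1 : |sm ν y| ^ 2 * |q.eval y|
      ≤ ((1 + M) * (1 + y ^ 2)) ^ 2 * (C * (1 + y ^ 2) ^ q.natDegree) :=
    mul_le_mul h0 (hb y) (abs_nonneg _) (by positivity)
  calc |sm ν y| ^ 2 * |q.eval y| * wm ν y
      ≤ ((1 + M) * (1 + y ^ 2)) ^ 2 * (C * (1 + y ^ 2) ^ q.natDegree) * wm ν y :=
        mul_le_mul_of_nonneg_right h1 (wm_pos ν hM hν y).le
  _ = (1 + M) ^ 2 * C * ((1 + y ^ 2) ^ (q.natDegree + 2) * wm ν y) := by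
        rw [pow_add]
        ring

lemma intJ4 (hM : 0 < M) (hν : ν (Set.Icc (-M) M)ᶜ = 0) (q : Polynomial ℝ) :
    Integrable (fun y => spd ν y * q.eval y * wm ν y) := by
  obtain ⟨C, hC, hb⟩ := poly_bound q
  apply workhorse_int ν hM hν (n := q.natDegree) (C := (1 + M ^ 2) * C) (h := fun y => spd ν y * q.eval y * wm ν y)
    (((cont_spd ν hM hν).mul q.continuous |>.mul (cont_wm ν hM hν)).aestronglyMeasurable)
    (by positivity)
  intro y
  rw [abs_mul, abs_mul, abs_of_pos (wm_pos ν hM hν y)]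
  have h1 : |spd ν y| * |q.eval y| ≤ (1 + M ^ 2) * (C * (1 + y ^ 2) ^ q.natDegree) :=
    mul_le_mul (abs_spd_le ν hM hν y) (hb y) (abs_nonneg _) (by positivity)
  calc |spd ν y| * |q.eval y| * wm ν y
      ≤ (1 + M ^ 2) * (C * (1 + y ^ 2) ^ q.natDegree) * wm ν y :=
        mul_le_mul_of_nonneg_right h1 (wm_pos ν hM hν y).le
  _ = (1 + M ^ 2) * C * ((1 + y ^ 2) ^ q.natDegree * wm ν y) := by ring

lemma ibp1 (hM : 0 < M) (hν : ν (Set.Icc (-M) M)ᶜ = 0) (r : Polynomial ℝ) :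
    ∫ y, (Polynomial.derivative r).eval y * wm ν y = ∫ y, sm ν y * r.eval y * wm ν y := by
  set u : ℝ → ℝ := fun y => r.eval y * wm ν y with hu
  set u' : ℝ → ℝ := fun y =>
    (Polynomial.derivative r).eval y * wm ν y + r.eval y * (-(sm ν y * wm ν y)) with hu'
  have hd : ∀ y, HasDerivAt u (u' y) y := fun y =>
    (r.hasDerivAt y).mul (hasDerivAt_wm ν hM hν y)
  have hneg : Integrable (fun y => r.eval y * (-(sm ν y * wm ν y))) := by
    apply ((intJ2 ν hM hν r).neg).congr
    filter_upwards with y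
    simp only [Pi.neg_apply]
    ring
  have hi : Integrable u' := (intJ1 ν hM hν (Polynomial.derivative r)).add hneg
  obtain ⟨C, hC, hb⟩ := poly_bound r
  have hbound : ∀ y, |u y| ≤ C * ((1 + y ^ 2) ^ r.natDegree * wm ν y) := by
    intro y
    rw [hu]
    simp only []
    rw [abs_mul, abs_of_pos (wm_pos ν hM hν y)]
    calc |r.eval y| * wm ν y ≤ (C * (1 + y ^ 2) ^ r.natDegree) * wm ν y :=
      mul_le_mul_of_nonneg_right (hb y) (wm_pos ν hM hν y).le
    _ = C * ((1 + y ^ 2) ^ r.natDegree * wm ν y) := by ring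
  have hzero : ∫ y, u' y = 0 :=
    integral_deriv_eq_zero hd hi
      (workhorse_tendsto_atTop ν hM hν hC hbound)
      (workhorse_tendsto_atBot ν hM hν hC hbound)
  rw [hu', integral_add (intJ1 ν hM hν (Polynomial.derivative r)) hneg] at hzero
  have h2 : ∫ y, r.eval y * (-(sm ν y * wm ν y)) = -∫ y, sm ν y * r.eval y * wm ν y := by
    rw [← integral_neg]
    apply integral_congr_ae
    filter_upwards with y
    ring
  rw [h2] at hzero
  linarith

lemma ibp2 (hM : 0 < M) (hν : ν (Set.Icc (-M) M)ᶜ = 0) (r : Polynomial ℝ) :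
    (∫ y, spd ν y * r.eval y * wm ν y)
      + ∫ y, sm ν y * (Polynomial.derivative r).eval y * wm ν y
      = ∫ y, sm ν y ^ 2 * r.eval y * wm ν y := by
  set u : ℝ → ℝ := fun y => sm ν y * (r.eval y * wm ν y) with hu
  set u' : ℝ → ℝ := fun y =>
    spd ν y * (r.eval y * wm ν y)
      + sm ν y * ((Polynomial.derivative r).eval y * wm ν y
        + r.eval y * (-(sm ν y * wm ν y))) with hu'
  have hd : ∀ y, HasDerivAt u (u' y) y := fun y =>
    (hasDerivAt_sm ν hM hν y).mul ((r.hasDerivAt y).mul (hasDerivAt_wm ν hM hν y))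
  have hi1 : Integrable (fun y => spd ν y * (r.eval y * wm ν y)) := by
    apply (intJ4 ν hM hν r).congr
    filter_upwards with y
    ring
  have hi2 : Integrable (fun y => sm ν y * ((Polynomial.derivative r).eval y * wm ν y)) := by
    apply (intJ2 ν hM hν (Polynomial.derivative r)).congr
    filter_upwards with y
    ring
  have hi3 : Integrable (fun y => sm ν y * (r.eval y * (-(sm ν y * wm ν y)))) := by
    apply ((intJ3 ν hM hν r).neg).congr
    filter_upwards with y
    simp only [Pi.neg_apply]
    ring
  have hi2' : Integrable (fun y => sm ν y * ((Polynomial.derivative r).eval y * wm ν y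
      + r.eval y * (-(sm ν y * wm ν y)))) := by
    apply (hi2.add hi3).congr
    filter_upwards with y
    simp only [Pi.add_apply]
    ring
  have hi : Integrable u' := hi1.add hi2'
  obtain ⟨C, hC, hb⟩ := poly_bound r
  have hbound : ∀ y, |u y| ≤ ((1 + M) * C) * ((1 + y ^ 2) ^ (r.natDegree + 1) * wm ν y) := by
    intro y
    rw [hu]
    simp only []
    rw [abs_mul, abs_mul, abs_of_pos (wm_pos ν hM hν y)]
    have h1 : |sm ν y| * |r.eval y|
        ≤ ((1 + M) * (1 + y ^ 2)) * (C * (1 + y ^ 2) ^ r.natDegree) :=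
      mul_le_mul (abs_sm_le' ν hM hν y) (hb y) (abs_nonneg _) (by positivity)
    calc |sm ν y| * (|r.eval y| * wm ν y)
        = |sm ν y| * |r.eval y| * wm ν y := by ring
    _ ≤ ((1 + M) * (1 + y ^ 2)) * (C * (1 + y ^ 2) ^ r.natDegree) * wm ν y :=
        mul_le_mul_of_nonneg_right h1 (wm_pos ν hM hν y).le
    _ = (1 + M) * C * ((1 + y ^ 2) ^ (r.natDegree + 1) * wm ν y) := by
        rw [pow_succ]
        ring
  have hzero : ∫ y, u' y = 0 :=
    integral_deriv_eq_zero hd hi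
      (workhorse_tendsto_atTop ν hM hν (by positivity) hbound)
      (workhorse_tendsto_atBot ν hM hν (by positivity) hbound)
  rw [hu', integral_add hi1 hi2'] at hzero
  have esplit : ∫ y, sm ν y * ((Polynomial.derivative r).eval y * wm ν y
      + r.eval y * (-(sm ν y * wm ν y)))
      = (∫ y, sm ν y * ((Polynomial.derivative r).eval y * wm ν y))
        + ∫ y, sm ν y * (r.eval y * (-(sm ν y * wm ν y))) := by
    rw [← integral_add hi2 hi3]
    apply integral_congr_ae
    filter_upwards with y
    ring
  rw [esplit] at hzero
  have e1 : ∫ y, spd ν y * (r.eval y * wm ν y) = ∫ y, spd ν y * r.eval y * wm ν y := by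
    apply integral_congr_ae
    filter_upwards with y
    ring
  have e2 : ∫ y, sm ν y * ((Polynomial.derivative r).eval y * wm ν y)
      = ∫ y, sm ν y * (Polynomial.derivative r).eval y * wm ν y := by
    apply integral_congr_ae
    filter_upwards with y
    ring
  have e3 : ∫ y, sm ν y * (r.eval y * (-(sm ν y * wm ν y)))
      = -∫ y, sm ν y ^ 2 * r.eval y * wm ν y := by
    rw [← integral_neg]
    apply integral_congr_ae
    filter_upwards with y
    ring
  rw [e1, e2, e3] at hzero
  linarith

lemma cs_w (hM : 0 < M) (hν : ν (Set.Icc (-M) M)ᶜ = 0) {A B : ℝ → ℝ}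
    (hA : Integrable (fun y => A y ^ 2 * wm ν y))
    (hB : Integrable (fun y => B y ^ 2 * wm ν y))
    (hAB : Integrable (fun y => A y * B y * wm ν y)) :
    (∫ y, A y * B y * wm ν y) ^ 2
      ≤ (∫ y, A y ^ 2 * wm ν y) * ∫ y, B y ^ 2 * wm ν y := by
  have hw : ∀ y, 0 ≤ wm ν y := fun y => (wm_pos ν hM hν y).le
  have e1 : (fun y => A y ^ 2 * wm ν y)
      = fun y => (A y * Real.sqrt (wm ν y)) ^ 2 := funext fun y => by
    rw [mul_pow, Real.sq_sqrt (hw y)]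
  have e2 : (fun y => B y ^ 2 * wm ν y)
      = fun y => (B y * Real.sqrt (wm ν y)) ^ 2 := funext fun y => by
    rw [mul_pow, Real.sq_sqrt (hw y)]
  have e3 : (fun y => A y * B y * wm ν y)
      = fun y => (A y * Real.sqrt (wm ν y)) * (B y * Real.sqrt (wm ν y)) := funext fun y => by
    rw [show A y * Real.sqrt (wm ν y) * (B y * Real.sqrt (wm ν y))
        = A y * B y * (Real.sqrt (wm ν y) * Real.sqrt (wm ν y)) from by ring,
      Real.mul_self_sqrt (hw y)]
  rw [e1, e2, e3]
  exact integral_cauchy_schwarz (e1 ▸ hA) (e2 ▸ hB) (e3 ▸ hAB)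

lemma intSq (hM : 0 < M) (hν : ν (Set.Icc (-M) M)ᶜ = 0) (q : Polynomial ℝ) :
    Integrable (fun y => q.eval y ^ 2 * wm ν y) := by
  apply (intJ1 ν hM hν (q * q)).congr
  filter_upwards with y
  simp only [Polynomial.eval_mul]
  ring

theorem core (hM : 0 < M) (hν : ν (Set.Icc (-M) M)ᶜ = 0) :
    ∀ k : ℕ, ∀ p : Polynomial ℝ, p.natDegree ≤ k →
      ∫ y, ((Polynomial.derivative p).eval y) ^ 2 * wm ν y
        ≤ (2 * M + 1) ^ 2 * (k + 1) * ∫ y, (p.eval y) ^ 2 * wm ν y := by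
  have hw : ∀ y, 0 ≤ wm ν y := fun y => (wm_pos ν hM hν y).le
  intro k
  induction k with
  | zero =>
    intro p hp
    have hp0 : Polynomial.derivative p = 0 := by
      rw [Polynomial.eq_C_of_natDegree_le_zero hp]
      simp
    rw [hp0]
    simp only [Polynomial.eval_zero]
    rw [show (fun y => (0:ℝ) ^ 2 * wm ν y) = fun _ => (0:ℝ) from funext fun y => by ring]
    rw [integral_zero]
    have h0 : 0 ≤ ∫ y, (p.eval y) ^ 2 * wm ν y :=
      integral_nonneg fun y => mul_nonneg (sq_nonneg _) (hw y)
    positivity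
  | succ k ih =>
    intro p hp
    set dp := Polynomial.derivative p with hdp
    set ddp := Polynomial.derivative dp with hddp
    set N1 := ∫ y, (dp.eval y) ^ 2 * wm ν y with hN1
    set N0 := ∫ y, (p.eval y) ^ 2 * wm ν y with hN0
    set N2 := ∫ y, (ddp.eval y) ^ 2 * wm ν y with hN2
    have hN1nn : 0 ≤ N1 := integral_nonneg fun y => mul_nonneg (sq_nonneg _) (hw y)
    have hN0nn : 0 ≤ N0 := integral_nonneg fun y => mul_nonneg (sq_nonneg _) (hw y)
    -- integrability package
    have iP2 := intSq ν hM hν p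
    have iQ2 := intSq ν hM hν dp
    have iR2 := intSq ν hM hν ddp
    have iSqq : Integrable (fun y => sm ν y ^ 2 * (dp.eval y * dp.eval y) * wm ν y) := by
      apply (intJ3 ν hM hν (dp * dp)).congr
      filter_upwards with y
      simp only [Polynomial.eval_mul]
    have iSqr : Integrable (fun y => sm ν y * (dp.eval y * ddp.eval y) * wm ν y) := by
      apply (intJ2 ν hM hν (dp * ddp)).congr
      filter_upwards with y
      simp only [Polynomial.eval_mul]
    have iRR : Integrable (fun y => ddp.eval y * ddp.eval y * wm ν y) := by
      apply (intJ1 ν hM hν (ddp * ddp)).congr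
      filter_upwards with y
      simp only [Polynomial.eval_mul]
    have iSpq : Integrable (fun y => sm ν y * (p.eval y * dp.eval y) * wm ν y) := by
      apply (intJ2 ν hM hν (p * dp)).congr
      filter_upwards with y
      simp only [Polynomial.eval_mul]
    have iPR : Integrable (fun y => p.eval y * ddp.eval y * wm ν y) := by
      apply (intJ1 ν hM hν (p * ddp)).congr
      filter_upwards with y
      simp only [Polynomial.eval_mul]
    have iB2 : Integrable (fun y => (sm ν y * dp.eval y - ddp.eval y) ^ 2 * wm ν y) := by
      have hcomb : Integrable (fun y =>
          (sm ν y ^ 2 * (dp.eval y * dp.eval y) * wm ν y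
            - 2 * (sm ν y * (dp.eval y * ddp.eval y) * wm ν y))
          + ddp.eval y * ddp.eval y * wm ν y) :=
        (iSqq.sub (iSqr.const_mul 2)).add iRR
      apply hcomb.congr
      filter_upwards with y
      ring
    have iPB : Integrable (fun y => p.eval y * (sm ν y * dp.eval y - ddp.eval y) * wm ν y) := by
      have hcomb : Integrable (fun y =>
          sm ν y * (p.eval y * dp.eval y) * wm ν y - p.eval y * ddp.eval y * wm ν y) :=
        iSpq.sub iPR
      apply hcomb.congr
      filter_upwards with y
      ring
    -- Identity A : N1 = ∫ P * (s Q - R) * w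
    have idA : N1 = ∫ y, p.eval y * (sm ν y * dp.eval y - ddp.eval y) * wm ν y := by
      have h := ibp1 ν hM hν (p * dp)
      rw [Polynomial.derivative_mul] at h
      have hL : ∫ y, (Polynomial.derivative p * dp + p * Polynomial.derivative dp).eval y * wm ν y
          = N1 + ∫ y, p.eval y * ddp.eval y * wm ν y := by
        rw [show (fun y => (Polynomial.derivative p * dp + p * Polynomial.derivative dp).eval y * wm ν y)
            = fun y => (dp.eval y) ^ 2 * wm ν y + p.eval y * ddp.eval y * wm ν y from
            funext fun y => by
              simp only [Polynomial.eval_add, Polynomial.eval_mul, ← hdp, ← hddp]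
              ring]
        exact integral_add iQ2 iPR
      have hR : ∫ y, sm ν y * (p * dp).eval y * wm ν y
          = ∫ y, sm ν y * (p.eval y * dp.eval y) * wm ν y := by
        apply integral_congr_ae
        filter_upwards with y
        simp only [Polynomial.eval_mul]
      rw [hL, hR] at h
      have hsub : ∫ y, p.eval y * (sm ν y * dp.eval y - ddp.eval y) * wm ν y
          = (∫ y, sm ν y * (p.eval y * dp.eval y) * wm ν y)
            - ∫ y, p.eval y * ddp.eval y * wm ν y := by
        rw [← integral_sub iSpq iPR]
        apply integral_congr_ae
        filter_upwards with y
        ring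
      rw [hsub]
      linarith
    -- Identity B : ∫ (s Q - R)^2 w ≤ N2 + (1 + M^2) N1
    have idB : ∫ y, (sm ν y * dp.eval y - ddp.eval y) ^ 2 * wm ν y
        ≤ N2 + (1 + M ^ 2) * N1 := by
      have i12 : Integrable (fun y => sm ν y ^ 2 * (dp.eval y * dp.eval y) * wm ν y
          - 2 * (sm ν y * (dp.eval y * ddp.eval y) * wm ν y)) :=
        iSqq.sub (iSqr.const_mul 2)
      have hexp : ∫ y, (sm ν y * dp.eval y - ddp.eval y) ^ 2 * wm ν y
          = ((∫ y, sm ν y ^ 2 * (dp.eval y * dp.eval y) * wm ν y)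
            - 2 * ∫ y, sm ν y * (dp.eval y * ddp.eval y) * wm ν y)
            + ∫ y, ddp.eval y * ddp.eval y * wm ν y := by
        have e1 : ∫ y, ((sm ν y ^ 2 * (dp.eval y * dp.eval y) * wm ν y
            - 2 * (sm ν y * (dp.eval y * ddp.eval y) * wm ν y))
            + ddp.eval y * ddp.eval y * wm ν y)
            = (∫ y, (sm ν y ^ 2 * (dp.eval y * dp.eval y) * wm ν y
              - 2 * (sm ν y * (dp.eval y * ddp.eval y) * wm ν y)))
              + ∫ y, ddp.eval y * ddp.eval y * wm ν y := integral_add i12 iRR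
        have e2 : ∫ y, (sm ν y ^ 2 * (dp.eval y * dp.eval y) * wm ν y
            - 2 * (sm ν y * (dp.eval y * ddp.eval y) * wm ν y))
            = (∫ y, sm ν y ^ 2 * (dp.eval y * dp.eval y) * wm ν y)
              - ∫ y, 2 * (sm ν y * (dp.eval y * ddp.eval y) * wm ν y) :=
          integral_sub iSqq (iSqr.const_mul 2)
        have e3 : ∫ y, 2 * (sm ν y * (dp.eval y * ddp.eval y) * wm ν y)
            = 2 * ∫ y, sm ν y * (dp.eval y * ddp.eval y) * wm ν y := integral_const_mul 2 _
        have e0 : ∫ y, (sm ν y * dp.eval y - ddp.eval y) ^ 2 * wm ν y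
            = ∫ y, ((sm ν y ^ 2 * (dp.eval y * dp.eval y) * wm ν y
              - 2 * (sm ν y * (dp.eval y * ddp.eval y) * wm ν y))
              + ddp.eval y * ddp.eval y * wm ν y) := by
          apply integral_congr_ae
          filter_upwards with y
          ring
        rw [e0, e1, e2, e3]
      have h2 := ibp2 ν hM hν (dp * dp)
      have hder : ∫ y, sm ν y * (Polynomial.derivative (dp * dp)).eval y * wm ν y
          = 2 * ∫ y, sm ν y * (dp.eval y * ddp.eval y) * wm ν y := by
        rw [← integral_const_mul]
        apply integral_congr_ae
        filter_upwards with y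
        rw [Polynomial.derivative_mul]
        simp only [Polynomial.eval_add, Polynomial.eval_mul, ← hddp]
        ring
      have hqq : ∫ y, sm ν y ^ 2 * (dp * dp).eval y * wm ν y
          = ∫ y, sm ν y ^ 2 * (dp.eval y * dp.eval y) * wm ν y := by
        apply integral_congr_ae
        filter_upwards with y
        simp only [Polynomial.eval_mul]
      rw [hder, hqq] at h2
      -- h2 : ∫ spd (qq) w + 2 ∫ s q r w = ∫ s² qq w
      have hspd : ∫ y, spd ν y * (dp * dp).eval y * wm ν y ≤ (1 + M ^ 2) * N1 := by
        have hmono : ∫ y, spd ν y * (dp * dp).eval y * wm ν y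
            ≤ ∫ y, (1 + M ^ 2) * ((dp.eval y) ^ 2 * wm ν y) := by
          apply integral_mono (intJ4 ν hM hν (dp * dp)) (iQ2.const_mul _)
          intro y
          simp only [Polynomial.eval_mul]
          have hle : spd ν y ≤ 1 + M ^ 2 := spd_le ν hM hν y
          have hnn : 0 ≤ dp.eval y * dp.eval y * wm ν y :=
            mul_nonneg (mul_self_nonneg _) (hw y)
          calc spd ν y * (dp.eval y * dp.eval y) * wm ν y
              = spd ν y * (dp.eval y * dp.eval y * wm ν y) := by ring
          _ ≤ (1 + M ^ 2) * (dp.eval y * dp.eval y * wm ν y) :=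
              mul_le_mul_of_nonneg_right hle hnn
          _ = (1 + M ^ 2) * (dp.eval y ^ 2 * wm ν y) := by ring
        rw [integral_const_mul] at hmono
        exact hmono
      have hrr : ∫ y, ddp.eval y * ddp.eval y * wm ν y = N2 := by
        apply integral_congr_ae
        filter_upwards with y
        ring
      rw [hexp, hrr]
      linarith
    -- Cauchy-Schwarz
    have hCS := cs_w ν hM hν iP2 iB2 iPB
    -- IH for dp
    have hdeg : dp.natDegree ≤ k := by
      have h1 : dp.natDegree ≤ p.natDegree - 1 := Polynomial.natDegree_derivative_le p
      omega
    have hIH := ih dp hdeg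
    -- hIH : N2' with derivative dp = ddp
    -- conclude
    have hB2nn : 0 ≤ ∫ y, (sm ν y * dp.eval y - ddp.eval y) ^ 2 * wm ν y :=
      integral_nonneg fun y => mul_nonneg (sq_nonneg _) (hw y)
    have hN2nn : 0 ≤ N2 := integral_nonneg fun y => mul_nonneg (sq_nonneg _) (hw y)
    have key : N1 ^ 2 ≤ N0 * ((2 * M + 1) ^ 2 * ((k:ℝ) + 2) * N1) := by
      have h1 : N1 ^ 2 ≤ N0 * ∫ y, (sm ν y * dp.eval y - ddp.eval y) ^ 2 * wm ν y := by
        rw [idA]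
        exact hCS
      have h2 : (∫ y, (sm ν y * dp.eval y - ddp.eval y) ^ 2 * wm ν y)
          ≤ (2 * M + 1) ^ 2 * ((k:ℝ) + 2) * N1 := by
        have h3 : N2 ≤ (2 * M + 1) ^ 2 * ((k:ℝ) + 1) * N1 := hIH
        have h4 : (1:ℝ) + M ^ 2 ≤ (2 * M + 1) ^ 2 := by nlinarith
        calc (∫ y, (sm ν y * dp.eval y - ddp.eval y) ^ 2 * wm ν y)
            ≤ N2 + (1 + M ^ 2) * N1 := idB
        _ ≤ (2 * M + 1) ^ 2 * ((k:ℝ) + 1) * N1 + (2 * M + 1) ^ 2 * N1 := by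
            have := mul_le_mul_of_nonneg_right h4 hN1nn
            linarith
        _ = (2 * M + 1) ^ 2 * ((k:ℝ) + 2) * N1 := by ring
      calc N1 ^ 2 ≤ N0 * ∫ y, (sm ν y * dp.eval y - ddp.eval y) ^ 2 * wm ν y := h1
      _ ≤ N0 * ((2 * M + 1) ^ 2 * ((k:ℝ) + 2) * N1) :=
          mul_le_mul_of_nonneg_left h2 hN0nn
    have hgoal : N1 ≤ (2 * M + 1) ^ 2 * ((k:ℝ) + 2) * N0 := by
      rcases eq_or_lt_of_le hN1nn with h0 | h0
      · rw [← h0]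
        positivity
      · nlinarith
    calc N1 ≤ (2 * M + 1) ^ 2 * ((k:ℝ) + 2) * N0 := hgoal
    _ = (2 * M + 1) ^ 2 * (((k:ℕ) + 1 : ℕ) + 1 : ℝ) * N0 := by
        push_cast
        ring

end Main
end BW

theorem bernstein_weight_compact (M : ℝ) (hM : 0 < M)
    (G H : Measure ℝ) [IsProbabilityMeasure G] [IsProbabilityMeasure H]
    (hG : G (Set.Icc (-M) M)ᶜ = 0) (hH : H (Set.Icc (-M) M)ᶜ = 0)
    (w : ℝ → ℝ) (hw : w = fun y => gauss y ^ 2 / ((mixDens G y + mixDens H y) / 2))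
    (k : ℕ) (p : Polynomial ℝ) (hp : p.natDegree ≤ k) :
    Real.sqrt (∫ y, (Polynomial.derivative p).eval y ^ 2 * w y) ≤
      (2 * M + 1) * Real.sqrt ((k : ℝ) + 1) *
        Real.sqrt (∫ y, p.eval y ^ 2 * w y) := by
  set ν : Measure ℝ := (2⁻¹ : ENNReal) • (G + H) with hνdef
  have hprob : IsProbabilityMeasure ν := by
    constructor
    rw [hνdef, Measure.smul_apply, Measure.add_apply, measure_univ, measure_univ,
      smul_eq_mul]
    rw [one_add_one_eq_two, ENNReal.inv_mul_cancel two_ne_zero ENNReal.ofNat_ne_top]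
  have hν : ν (Set.Icc (-M) M)ᶜ = 0 := by
    rw [hνdef, Measure.smul_apply, Measure.add_apply, hG, hH]
    simp
  have hmix : ∀ y, mixDens ν y = (mixDens G y + mixDens H y) / 2 := by
    intro y
    have h1 : mixDens ν y = (2⁻¹ : ENNReal).toReal • ∫ u, gauss (y - u) ∂(G + H) := by
      rw [hνdef]
      exact integral_smul_measure _ _
    rw [h1, integral_add_measure (BW.int_gauss G y) (BW.int_gauss H y)]
    rw [smul_eq_mul]
    have h2 : (2⁻¹ : ENNReal).toReal = (2 : ℝ)⁻¹ := by
      simp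
    rw [h2]
    unfold mixDens
    ring
  have hwm : w = BW.wm ν := by
    rw [hw]
    funext y
    unfold BW.wm
    rw [hmix y]
  have hcore := BW.core ν hM hν k p hp
  rw [hwm]
  have hN0nn : 0 ≤ ∫ y, (p.eval y) ^ 2 * BW.wm ν y :=
    integral_nonneg fun y => mul_nonneg (sq_nonneg _) (BW.wm_pos ν hM hν y).le
  calc Real.sqrt (∫ y, ((Polynomial.derivative p).eval y) ^ 2 * BW.wm ν y)
      ≤ Real.sqrt ((2 * M + 1) ^ 2 * ((k : ℝ) + 1) * ∫ y, (p.eval y) ^ 2 * BW.wm ν y) :=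
        Real.sqrt_le_sqrt hcore
  _ = (2 * M + 1) * Real.sqrt ((k : ℝ) + 1) * Real.sqrt (∫ y, (p.eval y) ^ 2 * BW.wm ν y) := by
      rw [show (2 * M + 1) ^ 2 * ((k : ℝ) + 1) * (∫ y, (p.eval y) ^ 2 * BW.wm ν y)
          = ((2 * M + 1) * Real.sqrt ((k : ℝ) + 1)) ^ 2 * ∫ y, (p.eval y) ^ 2 * BW.wm ν y from by
        rw [mul_pow, Real.sq_sqrt (by positivity)]]
      rw [Real.sqrt_mul (sq_nonneg _), Real.sqrt_sq (by positivity)]
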